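/- Let χ be a Dirichlet character modulo m, let s be a complex number with σ := Re(s) > 1, and let N₀ ≥ 1 be an integer. Then −2·log |L(χ, s)| + 2·Σ_{n=2}^{N₀} Re( χ(n)·Λ(n) / (n^s · log n) ) ≤ 2·( log ζ(σ) − Σ_{n=2}^{N₀} Λ(n) / (n^σ · log n) ), where ζ denotes the Riemann zeta function (which is real and greater than 1 at real σ > 1). -/

import Mathlib

open ArithmeticFunction Complex

private lemma natpow_cpow (p : ℕ) (k : ℕ) (s : ℂ) :
    ((p ^ k : ℕ) : ℂ) ^ s = ((p : ℂ) ^ s) ^ k := by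
  induction k with
  | zero => simp
  | succ k ih =>
    rw [pow_succ, Nat.cast_mul, ← ofReal_natCast (p ^ k), ← ofReal_natCast p,
      mul_cpow_ofReal_nonneg (by positivity) (by positivity), ofReal_natCast, ofReal_natCast,
      ih, pow_succ]

private lemma natpow_rpow (x : ℝ) (hx : 0 ≤ x) (k : ℕ) (t : ℝ) :
    (x ^ k) ^ t = (x ^ t) ^ k := by
  rw [← Real.rpow_natCast x k, ← Real.rpow_mul hx, mul_comm, Real.rpow_mul hx, Real.rpow_natCast]

theorem tail_log_bound (m : ℕ) (χ : DirichletCharacter ℂ m) (s : ℂ) (hs : 1 < s.re)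
    (N₀ : ℕ) (hN₀ : 1 ≤ N₀) :
    -2 * Real.log (‖LSeries (fun n => χ n) s‖) +
        2 * ∑ n ∈ Finset.Icc 2 N₀, (χ n * (Λ n : ℂ) / ((n : ℂ) ^ s * (Real.log n : ℂ))).re ≤
      2 * (Real.log (‖riemannZeta (s.re : ℂ)‖) -
        ∑ n ∈ Finset.Icc 2 N₀, Λ n / ((n : ℝ) ^ s.re * Real.log n)) := by
  have hsre : (1:ℝ) < ((s.re : ℂ)).re := by simpa using hs
  set g : ℕ → ℝ := fun n =>
    (χ n * (Λ n : ℂ) / ((n : ℂ) ^ s * (Real.log n : ℂ))).re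
      + Λ n / ((n : ℝ) ^ s.re * Real.log n) with hgdef
  -- basic bound on the complex term
  have habs : ∀ n : ℕ,
      ‖χ n * (Λ n : ℂ) / ((n : ℂ) ^ s * (Real.log n : ℂ))‖
        ≤ Λ n / ((n : ℝ) ^ s.re * Real.log n) := by
    intro n
    rcases lt_or_ge n 2 with h | h
    · interval_cases n <;> simp
    · have hn0 : 0 < n := by omega
      have hlog : 0 < Real.log n := Real.log_pos (by exact_mod_cast h.trans_lt' one_lt_two)
      have hrp : 0 < (n : ℝ) ^ s.re := Real.rpow_pos_of_pos (by exact_mod_cast hn0) _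
      rw [norm_div, norm_mul, norm_mul]
      rw [show ‖((n:ℂ)^s)‖ = (n:ℝ) ^ s.re from norm_natCast_cpow_of_pos hn0 s]
      rw [Complex.norm_of_nonneg vonMangoldt_nonneg,
        Complex.norm_of_nonneg hlog.le]
      have h1 : ‖χ n‖ ≤ 1 := χ.norm_le_one n
      exact (div_le_div_iff_of_pos_right (by positivity)).mpr
        (mul_le_of_le_one_left vonMangoldt_nonneg h1)
  have hnonneg : ∀ n : ℕ, 0 ≤ g n := by
    intro n
    simp only [hgdef]
    linarith [neg_abs_le (χ n * (Λ n : ℂ) / ((n : ℂ) ^ s * (Real.log n : ℂ))).re,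
      Complex.abs_re_le_norm (χ n * (Λ n : ℂ) / ((n : ℂ) ^ s * (Real.log n : ℂ))), habs n]
  have hle : ∀ n : ℕ, g n ≤ 2 * ((n : ℝ) ^ s.re)⁻¹ := by
    intro n
    rcases lt_or_ge n 2 with h | h
    · interval_cases n
      · simp [hgdef, Real.zero_rpow (by positivity : s.re ≠ 0)]
      · simp [hgdef]
    · have hn0 : 0 < n := by omega
      have hlog : 0 < Real.log n := Real.log_pos (by exact_mod_cast h.trans_lt' one_lt_two)
      have hrp : 0 < (n : ℝ) ^ s.re := Real.rpow_pos_of_pos (by exact_mod_cast hn0) _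
      have h2 : (χ n * (Λ n : ℂ) / ((n : ℂ) ^ s * (Real.log n : ℂ))).re
          ≤ Λ n / ((n : ℝ) ^ s.re * Real.log n) :=
        le_trans (Complex.re_le_norm _) (habs n)
      have h3 : Λ n / ((n : ℝ) ^ s.re * Real.log n) ≤ ((n : ℝ) ^ s.re)⁻¹ := by
        have h4 : Λ n / ((n : ℝ) ^ s.re * Real.log n)
            ≤ Real.log n / ((n : ℝ) ^ s.re * Real.log n) :=
          (div_le_div_iff_of_pos_right (by positivity)).mpr vonMangoldt_le_log
        have h5 : Real.log n / ((n : ℝ) ^ s.re * Real.log n) = ((n : ℝ) ^ s.re)⁻¹ := by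
          field_simp
        linarith
      simp only [hgdef]
      linarith
  have hsupp : Function.support g ⊆ {n | IsPrimePow n} := by
    intro n hn
    by_contra h
    apply hn
    have hΛ : Λ n = 0 := vonMangoldt_eq_zero_iff.mpr h
    simp [hgdef, hΛ]
  have hgsum : Summable g :=
    Summable.of_nonneg_of_le hnonneg hle ((Real.summable_nat_rpow_inv.mpr hs).mul_left 2)
  -- Euler products
  have hz2eq : ∀ p : Nat.Primes, ((p : ℕ) : ℂ) ^ (-((s.re : ℝ) : ℂ)) = (((p : ℕ) : ℝ) ^ (-s.re) : ℝ) := by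
    intro p
    rw [Complex.ofReal_cpow (Nat.cast_nonneg _), Complex.ofReal_natCast, Complex.ofReal_neg]
  have hz1norm : ∀ p : Nat.Primes, ‖χ p * ((p : ℕ) : ℂ) ^ (-s)‖ < 1 := by
    intro p
    have h1 : ‖((p : ℕ) : ℂ) ^ (-s)‖ = ((p : ℕ) : ℝ) ^ (-s.re) := by
      rw [norm_natCast_cpow_of_pos p.prop.pos, neg_re]
    have h2 : ((p : ℕ) : ℝ) ^ (-s.re) < 1 :=
      Real.rpow_lt_one_of_one_lt_of_neg (by exact_mod_cast p.prop.one_lt) (by linarith)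
    calc ‖χ p * ((p : ℕ) : ℂ) ^ (-s)‖ = ‖χ (p : ℕ)‖ * ‖((p : ℕ) : ℂ) ^ (-s)‖ := norm_mul _ _
      _ ≤ 1 * ‖((p : ℕ) : ℂ) ^ (-s)‖ := by gcongr; exact χ.norm_le_one _
      _ = ((p : ℕ) : ℝ) ^ (-s.re) := by rw [one_mul, h1]
      _ < 1 := h2
  have hz2norm : ∀ p : Nat.Primes, ‖((((p:ℕ) : ℝ) ^ (-s.re) : ℝ) : ℂ)‖ < 1 := by
    intro p
    rw [Complex.norm_real, Real.norm_eq_abs, _root_.abs_of_nonneg (by positivity)]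
    exact Real.rpow_lt_one_of_one_lt_of_neg (by exact_mod_cast p.prop.one_lt) (by linarith)
  have hinner : ∀ p : Nat.Primes, HasSum (fun k : ℕ => g ((p : ℕ) ^ (k + 1)))
      ((-Complex.log (1 - χ p * ((p : ℕ) : ℂ) ^ (-s))).re +
        (-Complex.log (1 - ((((p : ℕ) : ℝ) ^ (-s.re) : ℝ) : ℂ))).re) := by
    intro p
    have hp2 : (2 : ℕ) ≤ (p : ℕ) := p.prop.two_le
    have hplog : 0 < Real.log (p : ℕ) := Real.log_pos (by exact_mod_cast p.prop.one_lt)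
    have h1 := Complex.hasSum_re (hasSum_taylorSeries_neg_log (hz1norm p))
    have h2 := Complex.hasSum_re (hasSum_taylorSeries_neg_log (hz2norm p))
    have H := h1.add h2
    rw [← hasSum_nat_add_iff' 1] at H
    simp only [Finset.range_one, Finset.sum_singleton, pow_zero, Nat.cast_zero, div_zero,
      Complex.zero_re, add_zero, sub_zero] at H
    have hfun : (fun k : ℕ => g ((p : ℕ) ^ (k + 1))) = fun k : ℕ =>
        ((χ p * ((p : ℕ) : ℂ) ^ (-s)) ^ (k + 1) / ((k + 1 : ℕ) : ℂ)).re +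
          (((((p : ℕ) : ℝ) ^ (-s.re) : ℝ) : ℂ) ^ (k + 1) / ((k + 1 : ℕ) : ℂ)).re := by
      funext k
      have eΛ : Λ ((p : ℕ) ^ (k + 1)) = Real.log (p : ℕ) := by
        rw [vonMangoldt_apply_pow (Nat.succ_ne_zero k), vonMangoldt_apply_prime p.prop]
      have elog : Real.log ((((p : ℕ) ^ (k + 1) : ℕ)) : ℝ) = (k + 1 : ℝ) * Real.log (p : ℕ) := by
        rw [Nat.cast_pow, Real.log_pow]
        push_cast
        ring
      have echi : χ (((p : ℕ) ^ (k + 1) : ℕ)) = (χ (p : ℕ)) ^ (k + 1) := by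
        rw [Nat.cast_pow, map_pow]
      have epow : (((p : ℕ) ^ (k + 1) : ℕ) : ℂ) ^ s = (((p : ℕ) : ℂ) ^ s) ^ (k + 1) :=
        natpow_cpow (p : ℕ) (k + 1) s
      have ern : (((p : ℕ) ^ (k + 1) : ℕ) : ℝ) ^ s.re = ((((p : ℕ)) : ℝ) ^ s.re) ^ (k + 1) := by
        rw [Nat.cast_pow, natpow_rpow _ (Nat.cast_nonneg _)]
      have hne1 : (((p : ℕ) : ℂ) ^ s) ≠ 0 :=
        norm_ne_zero_iff.mp (norm_natCast_cpow_pos_of_pos p.prop.pos s).ne'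
      have hne2 : ((Real.log (p : ℕ) : ℝ) : ℂ) ≠ 0 := by
        exact_mod_cast hplog.ne'
      have hne2' : Complex.log ((p : ℕ) : ℂ) ≠ 0 := by
        rw [← Complex.natCast_log]; exact hne2
      have hne3 : ((k + 1 : ℕ) : ℂ) ≠ 0 := Nat.cast_ne_zero.mpr (Nat.succ_ne_zero k)
      have hrp : (0 : ℝ) < ((p : ℕ) : ℝ) ^ s.re :=
        Real.rpow_pos_of_pos (by exact_mod_cast p.prop.pos) _
      have hc : ((k + 1 : ℝ) : ℂ) = ((k + 1 : ℕ) : ℂ) := by push_cast; ring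
      simp only [hgdef]
      congr 1
      · -- complex part
        congr 1
        rw [eΛ, echi, epow, elog, Complex.cpow_neg, mul_pow, inv_pow, Complex.ofReal_mul, hc]
        have hrw : ∀ a A K L : ℂ, L ≠ 0 → A ≠ 0 → K ≠ 0 →
            a * L / (A * (K * L)) = a * A⁻¹ / K := by
          intro a A K L hL hA hK
          field_simp
        exact hrw _ _ _ _ hne2 (pow_ne_zero _ hne1) hne3
      · -- real part
        rw [← Complex.ofReal_pow, ← Complex.ofReal_natCast (k + 1), ← Complex.ofReal_div,
          Complex.ofReal_re, eΛ, elog, ern, Real.rpow_neg (Nat.cast_nonneg _), inv_pow]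
        field_simp
        push_cast
        ring
    rw [hfun]
    exact H
  have Sχ : Summable fun p : Nat.Primes => -Complex.log (1 - χ p * ((p : ℕ) : ℂ) ^ (-s)) :=
    χ.summable_neg_log_one_sub_mul_prime_cpow hs
  have Sζ : Summable fun p : Nat.Primes =>
      -Complex.log (1 - ((((p : ℕ) : ℝ) ^ (-s.re) : ℝ) : ℂ)) := by
    have h := (1 : DirichletCharacter ℂ 1).summable_neg_log_one_sub_mul_prime_cpow hsre
    simp only [MulChar.one_apply (isUnit_of_subsingleton _), one_mul, hz2eq] at h
    exact h
  have hχre := Complex.hasSum_re Sχ.hasSum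
  have hζre := Complex.hasSum_re Sζ.hasSum
  have htot := hχre.add hζre
  have hL : Real.log (‖LSeries (fun n => χ n) s‖) =
      (∑' p : Nat.Primes, -Complex.log (1 - χ p * ((p : ℕ) : ℂ) ^ (-s))).re := by
    rw [← DirichletCharacter.LSeries_eulerProduct_exp_log χ hs, Complex.norm_exp, Real.log_exp]
  have hZ : Real.log (‖riemannZeta (s.re : ℂ)‖) =
      (∑' p : Nat.Primes, -Complex.log (1 - ((((p : ℕ) : ℝ) ^ (-s.re) : ℝ) : ℂ))).re := by
    rw [← riemannZeta_eulerProduct_exp_log hsre, Complex.norm_exp, Real.log_exp]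
    congr 1
    exact tsum_congr fun p => by rw [hz2eq p]
  have hsum_eq : ∑' n, g n =
      (∑' p : Nat.Primes, -Complex.log (1 - χ p * ((p : ℕ) : ℂ) ^ (-s))).re +
      (∑' p : Nat.Primes, -Complex.log (1 - ((((p : ℕ) : ℝ) ^ (-s.re) : ℝ) : ℂ))).re := by
    rw [tsum_eq_tsum_primes_of_support_subset_prime_powers hgsum hsupp, ← htot.tsum_eq]
    exact tsum_congr fun p => (hinner p).tsum_eq
  have hfin : ∑ n ∈ Finset.Icc 2 N₀, g n ≤ ∑' n, g n :=
    Summable.sum_le_tsum _ (fun n _ => hnonneg n) hgsum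
  have hsplit : ∑ n ∈ Finset.Icc 2 N₀, g n =
      (∑ n ∈ Finset.Icc 2 N₀, (χ n * (Λ n : ℂ) / ((n : ℂ) ^ s * (Real.log n : ℂ))).re)
        + ∑ n ∈ Finset.Icc 2 N₀, Λ n / ((n : ℝ) ^ s.re * Real.log n) := by
    simp only [hgdef]
    exact Finset.sum_add_distrib
  rw [hL, hZ]
  rw [hsum_eq, hsplit] at hfin
  linarith
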